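/- Let C_i ≤ C_j be cyclic groups of orders i and j with i | j, and write i = uv where v is the largest divisor of i coprime to j/i. Then for each divisor d of v, the number of elements of order (j/v)·d in any fixed generating coset of C_j/C_i is u·φ(d), where φ is Euler's totient function. -/

import Mathlib

open Finset Subgroup

private lemma aux_card_pow_eq_one {G : Type*} [Group G] [Fintype G] [IsCyclic G] [DecidableEq G]
    {m : ℕ} (hm : m ∣ Fintype.card G) (hm0 : m ≠ 0) :
    (Finset.univ.filter fun y : G => y ^ m = 1).card = m := by
  rw [← sum_card_orderOf_eq_card_pow_eq_one hm0]
  rw [Finset.sum_congr rfl fun e he =>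
    IsCyclic.card_orderOf_eq_totient ((Nat.mem_divisors.mp he).1.trans hm)]
  exact Nat.sum_totient m

private lemma aux_exists_pow {G : Type*} [Group G] [Finite G] [IsCyclic G] {n : ℕ} (y : G)
    (hy : y ^ (Nat.card G / Nat.gcd (Nat.card G) n) = 1) : ∃ c : G, c ^ n = y := by
  obtain ⟨g, hg⟩ := IsCyclic.exists_generator (α := G)
  have hog : orderOf g = Nat.card G := orderOf_eq_card_of_forall_mem_zpowers hg
  set m := Nat.card G with hm
  have hm0 : m ≠ 0 := Nat.card_pos.ne'
  obtain ⟨k, hk'⟩ := hg y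
  have hk : g ^ k = y := hk'
  set e := Nat.gcd m n with he
  have hq0 : ((m / e : ℕ) : ℤ) ≠ 0 := by
    have h2 : m / e ≠ 0 := by
      have := Nat.div_mul_cancel (Nat.gcd_dvd_left m n)
      intro h0; rw [h0, zero_mul] at this; exact hm0 this.symm
    exact_mod_cast h2
  have h1 : g ^ (k * ((m / e : ℕ) : ℤ)) = 1 := by
    rw [zpow_mul, hk, zpow_natCast, hy]
  have hdvd : ((orderOf g : ℕ) : ℤ) ∣ k * ((m / e : ℕ) : ℤ) :=
    orderOf_dvd_iff_zpow_eq_one.mpr h1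
  rw [hog] at hdvd
  have hmsplit : (m : ℤ) = (e : ℤ) * ((m / e : ℕ) : ℤ) := by
    rw [← Nat.cast_mul, Nat.mul_div_cancel' (Nat.gcd_dvd_left m n)]
  rw [hmsplit] at hdvd
  obtain ⟨t, ht⟩ := (mul_dvd_mul_iff_right hq0).mp hdvd
  refine ⟨g ^ (t * Nat.gcdB m n), ?_⟩
  have hgm : g ^ ((m : ℕ) : ℤ) = 1 := by rw [zpow_natCast]; exact pow_card_eq_one'
  have hbez : ((e : ℕ) : ℤ) = m * Nat.gcdA m n + n * Nat.gcdB m n := Nat.gcd_eq_gcd_ab m n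
  have hkey : ((e : ℕ) : ℤ) * t
      = ((m : ℕ) : ℤ) * (Nat.gcdA m n * t) + t * Nat.gcdB m n * ((n : ℕ) : ℤ) := by
    rw [hbez]; ring
  rw [← zpow_natCast (g ^ (t * Nat.gcdB m n)) n, ← zpow_mul, ← hk, ht, hkey, zpow_add,
    zpow_mul g ((m : ℕ) : ℤ) (Nat.gcdA m n * t), hgm, one_zpow, one_mul]

/-- Let `Ci ≤ Cj` be cyclic of orders `i ∣ j`, write `i = u*v` with `v` the largest
divisor of `i` coprime to `j/i`. For each divisor `d` of `v`, the number of elements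
of order `(j/v)·d` in any fixed generating coset of `Cj/Ci` is `u·φ(d)`. -/
theorem stmt8 {Cj : Type*} [CommGroup Cj] [Finite Cj] [IsCyclic Cj]
    (j i u v : ℕ) (hj : Nat.card Cj = j) (Ci : Subgroup Cj) (hi : Nat.card Ci = i)
    (hij : i ∣ j) (huv : i = u * v) (hv : v ∣ i) (hvcop : Nat.Coprime v (j / i))
    (hvmax : ∀ w : ℕ, w ∣ i → Nat.Coprime w (j / i) → w ∣ v)
    (d : ℕ) (hd : d ∣ v)
    (x : Cj) (hgen : Subgroup.zpowers (QuotientGroup.mk x : Cj ⧸ Ci) = ⊤) :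
    Nat.card {h : Cj //
        (QuotientGroup.mk h : Cj ⧸ Ci) = QuotientGroup.mk x ∧
        orderOf h = (j / v) * d} = u * Nat.totient d := by
  classical
  have _inst : Fintype Cj := Fintype.ofFinite Cj
  have hj0 : j ≠ 0 := by rw [← hj]; exact Nat.card_pos.ne'
  have hi0 : i ≠ 0 := by rw [← hi]; exact Nat.card_pos.ne'
  have hu0 : u ≠ 0 := by rintro rfl; rw [zero_mul] at huv; exact hi0 huv
  have hv0 : v ≠ 0 := by rintro rfl; rw [mul_zero] at huv; exact hi0 huv
  have hvj : v ∣ j := hv.trans hij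
  set J := j / i with hJdef
  set W := j / v with hWdef
  have hJi : J * i = j := Nat.div_mul_cancel hij
  have hWv : W * v = j := Nat.div_mul_cancel hvj
  have hJ0 : J ≠ 0 := by intro h0; rw [h0, zero_mul] at hJi; exact hj0 hJi.symm
  have hW0 : W ≠ 0 := by intro h0; rw [h0, zero_mul] at hWv; exact hj0 hWv.symm
  have hjv : W = J * u := by
    have h1 : (J * u) * v = j := by rw [mul_assoc, ← huv, hJi]
    have h2 : W * v = (J * u) * v := by rw [hWv, h1]
    exact Nat.eq_of_mul_eq_mul_right (Nat.pos_of_ne_zero hv0) h2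
  -- order of mk x in the quotient is J
  have hcardQ : Nat.card (Cj ⧸ Ci) = J := by
    have h1 := Subgroup.card_eq_card_quotient_mul_card_subgroup Ci
    rw [hj, hi] at h1
    have h2 : J * i = Nat.card (Cj ⧸ Ci) * i := by rw [hJi, h1]
    exact (Nat.eq_of_mul_eq_mul_right (Nat.pos_of_ne_zero hi0) h2).symm
  have hordx : orderOf (QuotientGroup.mk x : Cj ⧸ Ci) = J := by
    rw [← Nat.card_zpowers, hgen, Subgroup.card_top, hcardQ]
  -- membership in Ci is characterized by the power equation
  have hCi : ∀ c : Cj, c ∈ Ci ↔ c ^ i = 1 := by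
    have hsub : (Finset.univ.filter fun c : Cj => c ∈ Ci)
        ⊆ (Finset.univ.filter fun c : Cj => c ^ i = 1) := by
      intro c hc
      simp only [Finset.mem_filter, Finset.mem_univ, true_and] at hc ⊢
      have h1 : (⟨c, hc⟩ : Ci) ^ i = 1 := by rw [← hi]; exact pow_card_eq_one'
      have h2 := congrArg (fun z : Ci => (z : Cj)) h1
      simpa using h2
    have hcard1 : (Finset.univ.filter fun c : Cj => c ∈ Ci).card = i := by
      rw [← hi, Nat.card_eq_fintype_card, Fintype.card_subtype]
    have hcard2 : (Finset.univ.filter fun c : Cj => c ^ i = 1).card = i :=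
      aux_card_pow_eq_one (by rw [← Nat.card_eq_fintype_card, hj]; exact hij) hi0
    have hEq := Finset.eq_of_subset_of_card_le hsub (by rw [hcard1, hcard2])
    intro c
    constructor
    · intro hc
      have hmem1 : c ∈ (Finset.univ.filter fun c : Cj => c ∈ Ci) := by simp [hc]
      rw [hEq] at hmem1
      simpa using hmem1
    · intro hc
      have : c ∈ (Finset.univ.filter fun c : Cj => c ^ i = 1) := by simp [hc]
      rw [← hEq] at this
      simpa using this
  -- structure of orders of elements in the coset
  have key : ∀ h : Cj, (QuotientGroup.mk h : Cj ⧸ Ci) = QuotientGroup.mk x →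
      ∃ e, e ∣ v ∧ orderOf h = W * e := by
    intro h hh
    set o := orderOf h with ho
    have hoj : o ∣ j := by rw [← hj]; exact orderOf_dvd_natCard h
    have hordh : orderOf (QuotientGroup.mk h : Cj ⧸ Ci) = J := by rw [hh]; exact hordx
    have hJo : J ∣ o := by
      rw [← hordh]; exact orderOf_map_dvd (QuotientGroup.mk' Ci) h
    set g := j / o with hgdef
    have hgo : o * g = j := Nat.mul_div_cancel' hoj
    have ho0 : o ≠ 0 := by
      intro h0; rw [h0, zero_mul] at hgo; exact hj0 hgo.symm
    have hg0 : g ≠ 0 := by intro h0; rw [h0, mul_zero] at hgo; exact hj0 hgo.symm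
    have hgi : g ∣ i := by
      obtain ⟨t, ht⟩ := hJo
      refine ⟨t, ?_⟩
      have h1 : J * (t * g) = J * i := by
        rw [← mul_assoc, ← ht, hgo, hJi]
      have h2 := Nat.eq_of_mul_eq_mul_left (Nat.pos_of_ne_zero hJ0) h1
      rw [← h2, mul_comm]
    have hcop : Nat.Coprime g J := by
      by_contra hc
      have hp : (Nat.gcd g J).minFac.Prime := Nat.minFac_prime hc
      set p := (Nat.gcd g J).minFac with hpdef
      have hpg : p ∣ g := (Nat.minFac_dvd _).trans (Nat.gcd_dvd_left _ _)
      have hpJ : p ∣ J := (Nat.minFac_dvd _).trans (Nat.gcd_dvd_right _ _)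
      obtain ⟨s, hs⟩ := hpg
      obtain ⟨r, hr⟩ := hpJ
      have hjp : j = p * (o * s) := by rw [← hgo, hs]; ring
      have hcancel : o * s = r * i := by
        refine Nat.eq_of_mul_eq_mul_left hp.pos ?_
        rw [← hjp, ← hJi, hr]; ring
      have hs0 : s ≠ 0 := by rintro rfl; rw [mul_zero] at hs; exact hg0 hs
      -- every element is killed by o * s
      have hall : ∀ z : Cj, z ^ (o * s) = 1 := by
        intro z
        have hz : (QuotientGroup.mk z : Cj ⧸ Ci) ∈ Subgroup.zpowers
            (QuotientGroup.mk h : Cj ⧸ Ci) := by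
          have : Subgroup.zpowers (QuotientGroup.mk h : Cj ⧸ Ci) = ⊤ := by rw [hh]; exact hgen
          rw [this]; exact Subgroup.mem_top _
        obtain ⟨k, hk'⟩ := hz
        have hk : ((h ^ k : Cj) : Cj ⧸ Ci) = QuotientGroup.mk z := by
          rw [QuotientGroup.mk_zpow]; exact hk'
        have hmem : (h ^ k)⁻¹ * z ∈ Ci := QuotientGroup.eq.mp hk
        have hzz : z = h ^ k * ((h ^ k)⁻¹ * z) := by group
        rw [hzz, mul_pow]
        have hos : h ^ (o * s) = 1 := by
          rw [pow_mul, ho, pow_orderOf_eq_one, one_pow]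
        have h1 : (h ^ k) ^ (o * s) = 1 := by
          rw [← zpow_natCast (h ^ k) (o * s), ← zpow_mul, mul_comm k ((o * s : ℕ) : ℤ),
            zpow_mul, zpow_natCast, hos, one_zpow]
        have h2 : ((h ^ k)⁻¹ * z) ^ (o * s) = 1 := by
          have hci : ((h ^ k)⁻¹ * z) ^ i = 1 := (hCi _).mp hmem
          rw [hcancel, mul_comm r i, pow_mul, hci, one_pow]
        rw [h1, h2, one_mul]
      obtain ⟨g0, hg0gen⟩ := IsCyclic.exists_generator (α := Cj)
      have hordg0 : orderOf g0 = j := by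
        rw [orderOf_eq_card_of_forall_mem_zpowers hg0gen, hj]
      have hdvd : j ∣ o * s := by
        rw [← hordg0]; exact orderOf_dvd_of_pow_eq_one (hall g0)
      have hle : j ≤ o * s :=
        Nat.le_of_dvd (Nat.pos_of_ne_zero (by
          intro h0
          rw [h0, mul_zero] at hjp; exact hj0 hjp)) hdvd
      have hlt : o * s < j := by
        rw [hjp]
        have h2 : 2 ≤ p := hp.two_le
        have hpos : 0 < o * s := Nat.pos_of_ne_zero (mul_ne_zero ho0 hs0)
        calc o * s < 2 * (o * s) := by omega
          _ ≤ p * (o * s) := Nat.mul_le_mul_right _ h2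
      omega
    have hgv : g ∣ v := hvmax g hgi hcop
    obtain ⟨e, hev⟩ := hgv
    refine ⟨e, ⟨g, by rw [hev]; ring⟩, ?_⟩
    have h1 : o * g = (W * e) * g := by
      calc o * g = j := hgo
        _ = J * i := hJi.symm
        _ = (W * e) * g := by rw [huv, hev, hjv]; ring
    exact Nat.eq_of_mul_eq_mul_right (Nat.pos_of_ne_zero hg0) h1
  -- counting solutions of the power equation in the coset
  have count : ∀ d', d' ∣ v →
      (Finset.univ.filter fun h : Cj =>
        (QuotientGroup.mk h : Cj ⧸ Ci) = QuotientGroup.mk x ∧ h ^ (W * d') = 1).card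
      = u * d' := by
    intro d' hd'
    have hd'0 : d' ≠ 0 := by rintro rfl; exact hv0 (Nat.eq_zero_of_zero_dvd hd')
    set n := W * d' with hn
    have hnJ : n = J * (u * d') := by rw [hn, hjv]; ring
    have hnJ' : n = (u * d') * J := by rw [hnJ]; ring
    have hvd' : d' * (v / d') = v := Nat.mul_div_cancel' hd'
    have hiud : i = (u * d') * (v / d') := by rw [mul_assoc, hvd', huv]
    have hgcd : Nat.gcd i n = u * d' := by
      have h1 : Nat.gcd i n = u * Nat.gcd v (d' * J) := by
        rw [huv, hnJ]
        rw [show J * (u * d') = u * (d' * J) by ring]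
        exact Nat.gcd_mul_left u v (d' * J)
      rw [h1, Nat.Coprime.gcd_mul_right_cancel_right d' hvcop.symm, Nat.gcd_eq_right hd']
    have hud'0 : u * d' ≠ 0 := mul_ne_zero hu0 hd'0
    have hud'j : u * d' ∣ j := by
      refine dvd_trans ?_ hij
      rw [huv]; exact mul_dvd_mul_left u hd'
    -- construct a base point h0 of the coset with h0 ^ n = 1
    have hxJ : x ^ J ∈ Ci := by
      rw [← QuotientGroup.eq_one_iff, QuotientGroup.mk_pow, ← hordx]
      exact pow_orderOf_eq_one _
    have hxn : x ^ n ∈ Ci := by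
      rw [hnJ, pow_mul]; exact Subgroup.pow_mem Ci hxJ (u * d')
    have hyy : ((⟨x ^ n, hxn⟩ : Ci)⁻¹) ^ (Nat.card Ci / Nat.gcd (Nat.card Ci) n) = 1 := by
      have hE : Nat.card Ci / Nat.gcd (Nat.card Ci) n = v / d' := by
        rw [hi, hgcd, hiud, Nat.mul_div_cancel_left _ (Nat.pos_of_ne_zero hud'0)]
      rw [hE]
      have hnE : n * (v / d') = j := by
        rw [hn, mul_assoc, hvd', hWv]
      have hco : ((x ^ n)⁻¹) ^ (v / d') = 1 := by
        rw [← inv_pow, ← pow_mul, hnE, ← hj, pow_card_eq_one']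
      ext
      push_cast
      rw [hco]
    obtain ⟨c, hc⟩ := aux_exists_pow _ hyy
    set h0 := x * (c : Cj) with hh0
    have hh0mk : (QuotientGroup.mk h0 : Cj ⧸ Ci) = QuotientGroup.mk x := by
      rw [eq_comm, QuotientGroup.eq]
      simpa [hh0] using c.2
    have hcc : (c : Cj) ^ n = (x ^ n)⁻¹ := by
      have := congrArg (fun z : Ci => (z : Cj)) hc
      simpa using this
    have hh0n : h0 ^ n = 1 := by
      rw [hh0, mul_pow, hcc, mul_inv_cancel]
    -- the coset solutions biject with solutions of z ^ (u*d') = 1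
    rw [← aux_card_pow_eq_one (G := Cj) (m := u * d')
      (by rw [← Nat.card_eq_fintype_card, hj]; exact hud'j) hud'0]
    apply Finset.card_bij' (i := fun h _ => h0⁻¹ * h) (j := fun z _ => h0 * z)
    · intro h hh
      simp only [Finset.mem_filter, Finset.mem_univ, true_and] at hh ⊢
      obtain ⟨hh1, hh2⟩ := hh
      have hmem : h0⁻¹ * h ∈ Ci := by
        refine QuotientGroup.eq.mp ?_
        rw [hh0mk, hh1]
      have hci : (h0⁻¹ * h) ^ i = 1 := (hCi _).mp hmem
      have hcn : (h0⁻¹ * h) ^ n = 1 := by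
        rw [mul_pow, inv_pow, hh0n, inv_one, one_mul, hh2]
      have : (h0⁻¹ * h) ^ Nat.gcd i n = 1 := pow_gcd_eq_one.mpr ⟨hci, hcn⟩
      rwa [hgcd] at this
    · intro z hz
      simp only [Finset.mem_filter, Finset.mem_univ, true_and] at hz ⊢
      have hzi : z ^ i = 1 := by
        rw [hiud, pow_mul, hz, one_pow]
      have hzmem : z ∈ Ci := (hCi z).mpr hzi
      constructor
      · rw [eq_comm, QuotientGroup.eq]
        have : x⁻¹ * (h0 * z) = (c : Cj) * z := by rw [hh0]; group
        rw [this]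
        exact Subgroup.mul_mem Ci c.2 hzmem
      · rw [mul_pow, hh0n, one_mul, hnJ', pow_mul, hz, one_pow]
    · intro h _; group
    · intro z _; group
  -- partition the power-equation solutions by order
  have part : ∀ d', d' ∣ v →
      (Finset.univ.filter fun h : Cj =>
        (QuotientGroup.mk h : Cj ⧸ Ci) = QuotientGroup.mk x ∧ h ^ (W * d') = 1).card
      = ∑ e ∈ d'.divisors, (Finset.univ.filter fun h : Cj =>
          (QuotientGroup.mk h : Cj ⧸ Ci) = QuotientGroup.mk x ∧ orderOf h = W * e).card := by
    intro d' hd'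
    have hd'0 : d' ≠ 0 := by rintro rfl; exact hv0 (Nat.eq_zero_of_zero_dvd hd')
    rw [Finset.card_eq_sum_card_fiberwise (f := fun h : Cj => orderOf h / W)
      (t := d'.divisors) ?_]
    · refine Finset.sum_congr rfl fun e he => ?_
      congr 1
      ext h
      simp only [Finset.mem_filter, Finset.mem_univ, true_and]
      beta_reduce
      obtain ⟨hed, _⟩ := Nat.mem_divisors.mp he
      constructor
      · rintro ⟨⟨h1, h2⟩, h3⟩
        obtain ⟨e0, he0v, he0⟩ := key h h1
        refine ⟨h1, ?_⟩
        rw [he0, Nat.mul_div_cancel_left e0 (Nat.pos_of_ne_zero hW0)] at h3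
        rw [he0, h3]
      · rintro ⟨h1, h2⟩
        refine ⟨⟨h1, ?_⟩, ?_⟩
        · apply orderOf_dvd_iff_pow_eq_one.mp
          rw [h2]; exact mul_dvd_mul_left W hed
        · rw [h2, Nat.mul_div_cancel_left e (Nat.pos_of_ne_zero hW0)]
    · intro h hh
      simp only [Finset.mem_coe, Finset.mem_filter, Finset.mem_univ, true_and] at hh
      obtain ⟨h1, h2⟩ := hh
      obtain ⟨e0, he0v, he0⟩ := key h h1
      show orderOf h / W ∈ d'.divisors
      have he0d : e0 ∣ d' := by
        have : orderOf h ∣ W * d' := orderOf_dvd_of_pow_eq_one h2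
        rw [he0] at this
        exact (mul_dvd_mul_iff_left (show W ≠ 0 from hW0)).mp this
      rw [he0, Nat.mul_div_cancel_left e0 (Nat.pos_of_ne_zero hW0)]
      exact Nat.mem_divisors.mpr ⟨he0d, hd'0⟩
  -- main induction
  have main : ∀ d', d' ∣ v →
      (Finset.univ.filter fun h : Cj =>
        (QuotientGroup.mk h : Cj ⧸ Ci) = QuotientGroup.mk x ∧ orderOf h = W * d').card
      = u * Nat.totient d' := by
    intro d'
    induction d' using Nat.strong_induction_on with
    | _ d' IH =>
      intro hd'
      have hd'0 : d' ≠ 0 := by rintro rfl; exact hv0 (Nat.eq_zero_of_zero_dvd hd')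
      have hsum := (count d' hd').symm.trans (part d' hd')
      rw [← Nat.cons_self_properDivisors hd'0, Finset.sum_cons] at hsum
      have hproper : ∑ e ∈ d'.properDivisors, (Finset.univ.filter fun h : Cj =>
            (QuotientGroup.mk h : Cj ⧸ Ci) = QuotientGroup.mk x ∧ orderOf h = W * e).card
          = ∑ e ∈ d'.properDivisors, u * Nat.totient e := by
        refine Finset.sum_congr rfl fun e he => ?_
        obtain ⟨hedvd, helt⟩ := Nat.mem_properDivisors.mp he
        exact IH e helt (hedvd.trans hd')
      rw [hproper] at hsum
      have htot : u * d' = u * Nat.totient d' + ∑ e ∈ d'.properDivisors, u * Nat.totient e := by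
        rw [← Finset.mul_sum, ← Nat.mul_add]
        congr 1
        rw [← Finset.sum_cons (Nat.self_notMem_properDivisors),
          Nat.cons_self_properDivisors hd'0, Nat.sum_totient]
      omega
  -- conclude
  rw [Nat.card_eq_fintype_card, Fintype.card_subtype]
  exact main d hd
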